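/- Let Z be a set of 9 points in P^2(C) containing exactly one line L with |L ∩ Z| = 4 and no line containing 5 or more points of Z, and suppose no three of the remaining 5 points R = Z \ L are collinear. Write L ∩ Z = {Z1,Z2,Z3,Z4}. Then there exist two points of R whose joining line meets L outside of Z. -/

import Mathlib

open MvPolynomial

noncomputable section

abbrev P2 := Projectivization ℂ (Fin 3 → ℂ)

/-- A projective line in `P2`, given as the zero set of a nonzero linear form. -/
def IsLine (S : Set P2) : Prop :=
  ∃ f : (Fin 3 → ℂ) →ₗ[ℂ] ℂ, f ≠ 0 ∧ S = {p : P2 | f p.rep = 0}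

/-- Three points of `P2` are collinear if some line contains all of them. -/
def Collinear3 (p q r : P2) : Prop :=
  ∃ S : Set P2, IsLine S ∧ p ∈ S ∧ q ∈ S ∧ r ∈ S

/-- A point of `P2` from homogeneous coordinates. -/
def pt (v : Fin 3 → ℂ) (h : v ≠ 0) : P2 := Projectivization.mk ℂ v h

/-- Two sets of points of `P2` are projectively equivalent if a linear automorphism
of `ℂ³` carries one onto the other. -/
def ProjEquiv (A B : Set P2) : Prop :=
  ∃ g : (Fin 3 → ℂ) ≃ₗ[ℂ] (Fin 3 → ℂ),
    B = Projectivization.map (g : (Fin 3 → ℂ) →ₗ[ℂ] (Fin 3 → ℂ)) g.injective '' A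


open Projectivization Module

lemma h3dim : finrank ℂ (Fin 3 → ℂ) = 3 := Module.finrank_fin_fun ℂ

lemma rep_indep {p q : P2} (h : p ≠ q) : LinearIndependent ℂ ![p.rep, q.rep] := by
  have h2 := (Projectivization.independent_pair_iff_ne p q).2 h
  rw [Projectivization.independent_iff] at h2
  have he : Projectivization.rep ∘ ![p, q] = ![p.rep, q.rep] := by
    funext i; fin_cases i <;> rfl
  rwa [he] at h2

lemma ker_finrank {f : (Fin 3 → ℂ) →ₗ[ℂ] ℂ} (hf : f ≠ 0) :
    finrank ℂ (LinearMap.ker f) = 2 := by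
  have h1 := f.finrank_range_add_finrank_ker
  rw [h3dim] at h1
  have h3 : LinearMap.range f = ⊤ := by
    rcases Ideal.eq_bot_or_top (LinearMap.range f) with h | h
    · exact absurd (LinearMap.range_eq_bot.1 h) hf
    · exact h
  rw [h3] at h1
  have h4 : finrank ℂ (⊤ : Submodule ℂ ℂ) = 1 := by
    rw [finrank_top, Module.finrank_self]
  omega

lemma mem_line_mk (f : (Fin 3 → ℂ) →ₗ[ℂ] ℂ) {v : Fin 3 → ℂ} (hv : v ≠ 0) :
    f ((Projectivization.mk ℂ v hv).rep) = 0 ↔ f v = 0 := by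
  obtain ⟨a, ha⟩ := Projectivization.exists_smul_eq_mk_rep ℂ v hv
  rw [← ha, Units.smul_def, map_smul, smul_eq_mul, mul_eq_zero]
  simp [a.ne_zero]

lemma line_unique {S1 S2 : Set P2} (h1 : IsLine S1) (h2 : IsLine S2) {p q : P2} (hpq : p ≠ q)
    (hp1 : p ∈ S1) (hq1 : q ∈ S1) (hp2 : p ∈ S2) (hq2 : q ∈ S2) : S1 = S2 := by
  obtain ⟨f, hf, rfl⟩ := h1
  obtain ⟨g, hg, rfl⟩ := h2
  have hker : ∀ h : (Fin 3 → ℂ) →ₗ[ℂ] ℂ, h ≠ 0 → h p.rep = 0 → h q.rep = 0 →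
      LinearMap.ker h = Submodule.span ℂ (Set.range ![p.rep, q.rep]) := by
    intro h hh hp hq
    symm
    apply Submodule.eq_of_le_of_finrank_eq
    · rw [Submodule.span_le]
      rintro v ⟨i, rfl⟩
      fin_cases i
      · simpa using hp
      · simpa using hq
    · rw [finrank_span_eq_card (rep_indep hpq), ker_finrank hh]
      simp
  ext r
  simp only [Set.mem_setOf_eq]
  constructor
  · intro hr
    have : r.rep ∈ LinearMap.ker g := by
      rw [hker g hg hp2 hq2, ← hker f hf hp1 hq1]; exact hr
    exact this
  · intro hr
    have : r.rep ∈ LinearMap.ker f := by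
      rw [hker f hf hp1 hq1, ← hker g hg hp2 hq2]; exact hr
    exact this

lemma exists_line_through (p q : P2) (hpq : p ≠ q) :
    ∃ S : Set P2, IsLine S ∧ p ∈ S ∧ q ∈ S := by
  set W := Submodule.span ℂ (Set.range ![p.rep, q.rep]) with hW
  have hWlt : W < ⊤ := by
    apply Submodule.lt_top_of_finrank_lt_finrank
    rw [finrank_span_eq_card (rep_indep hpq), h3dim]
    simp
  obtain ⟨f, hf, hmap⟩ := Submodule.exists_dual_map_eq_bot_of_lt_top hWlt inferInstance
  have hzero : ∀ v ∈ W, f v = 0 := by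
    intro v hv
    have h0 : f v ∈ W.map f := ⟨v, hv, rfl⟩
    rw [hmap] at h0
    exact Submodule.mem_bot ℂ |>.1 h0
  refine ⟨{r : P2 | f r.rep = 0}, ⟨f, hf, rfl⟩, ?_, ?_⟩
  · exact hzero p.rep (Submodule.subset_span ⟨0, rfl⟩)
  · exact hzero q.rep (Submodule.subset_span ⟨1, by simp⟩)

lemma lines_intersect {S1 S2 : Set P2} (h1 : IsLine S1) (h2 : IsLine S2) :
    ∃ x : P2, x ∈ S1 ∧ x ∈ S2 := by
  obtain ⟨f, hf, rfl⟩ := h1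
  obtain ⟨g, hg, rfl⟩ := h2
  have hfk := ker_finrank hf
  have hgk := ker_finrank hg
  have hsum := Submodule.finrank_sup_add_finrank_inf_eq (LinearMap.ker f) (LinearMap.ker g)
  have hsup : finrank ℂ ↥(LinearMap.ker f ⊔ LinearMap.ker g) ≤ 3 := by
    have := Submodule.finrank_le (LinearMap.ker f ⊔ LinearMap.ker g)
    rwa [h3dim] at this
  have hinf : 0 < finrank ℂ ↥(LinearMap.ker f ⊓ LinearMap.ker g) := by omega
  have hne : LinearMap.ker f ⊓ LinearMap.ker g ≠ ⊥ := by
    intro h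
    rw [h, finrank_bot] at hinf
    omega
  obtain ⟨v, hv, hv0⟩ := Submodule.exists_mem_ne_zero_of_ne_bot hne
  refine ⟨Projectivization.mk ℂ v hv0, ?_, ?_⟩ <;> simp only [Set.mem_setOf_eq]
  · exact (mem_line_mk f hv0).2 hv.1
  · exact (mem_line_mk g hv0).2 hv.2

lemma even_card_of_invol {α : Type*} [DecidableEq α] (σ : α → α) :
    ∀ s : Finset α, (∀ a ∈ s, σ a ∈ s) → (∀ a ∈ s, σ (σ a) = a) →
      (∀ a ∈ s, σ a ≠ a) → Even s.card := by
  intro s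
  induction s using Finset.strongInduction with
  | _ s ih =>
    intro h1 h2 h3
    rcases s.eq_empty_or_nonempty with rfl | ⟨a, ha⟩
    · simp
    · have hsa : σ a ∈ s := h1 a ha
      have hne : σ a ≠ a := h3 a ha
      have hsub : ({a, σ a} : Finset α) ⊆ s := by
        intro x hx
        simp only [Finset.mem_insert, Finset.mem_singleton] at hx
        rcases hx with rfl | rfl <;> assumption
      have hss : s \ {a, σ a} ⊂ s :=
        Finset.sdiff_ssubset hsub ⟨a, by simp⟩
      have hmem : ∀ b ∈ s \ {a, σ a}, σ b ∈ s \ {a, σ a} := by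
        intro b hb
        simp only [Finset.mem_sdiff, Finset.mem_insert, Finset.mem_singleton] at hb ⊢
        obtain ⟨hbs, hb2⟩ := hb
        push_neg at hb2
        refine ⟨h1 b hbs, ?_⟩
        rintro (h | h)
        · exact hb2.2 (by rw [← h2 b hbs, h])
        · apply hb2.1
          have := congrArg σ h
          rwa [h2 b hbs, h2 a ha] at this
      have hev := ih _ hss hmem
        (fun b hb => h2 b (Finset.mem_sdiff.1 hb).1)
        (fun b hb => h3 b (Finset.mem_sdiff.1 hb).1)
      have h2' : ({a, σ a} : Finset α).card = 2 := by
        rw [Finset.card_insert_of_notMem (by simp [Ne.symm hne]), Finset.card_singleton]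
      have hc := Finset.card_sdiff_add_card_eq_card hsub
      obtain ⟨k, hk⟩ := hev
      exact ⟨k + 1, by omega⟩

/-- If a set of nine points has exactly one 4-rich line `L`, no 5-rich lines, and no
three of the remaining five points are collinear, then two of the remaining five
points span a line meeting `L` outside of `Z`. -/
theorem stmt19 (Z : Set P2) (hcard : Z.ncard = 9)
    (L : Set P2) (hL : IsLine L) (hL4 : (Z ∩ L).ncard = 4)
    (hunique : ∀ S : Set P2, IsLine S → (Z ∩ S).ncard = 4 → S = L)
    (h5 : ∀ S : Set P2, IsLine S → (Z ∩ S).ncard ≤ 4)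
    (hR : ∀ p ∈ Z \ L, ∀ q ∈ Z \ L, ∀ r ∈ Z \ L,
      p ≠ q → p ≠ r → q ≠ r → ¬ Collinear3 p q r) :
    ∃ p ∈ Z \ L, ∃ q ∈ Z \ L, p ≠ q ∧
      ∃ S : Set P2, IsLine S ∧ p ∈ S ∧ q ∈ S ∧ ∀ x ∈ S ∩ L, x ∉ Z := by
  classical
  by_contra hcon
  push_neg at hcon
  have hZfin : Z.Finite := by
    rcases Z.finite_or_infinite with h | h
    · exact h
    · rw [Set.Infinite.ncard h] at hcard; omega
  set R := Z \ L with hRdef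
  have hRL : ∀ p ∈ R, p ∉ L := fun p hp => hp.2
  have hRfin : R.Finite := hZfin.diff
  have hRcard : R.ncard = 5 := by
    have h1 : R = Z \ (Z ∩ L) := by
      ext y; simp only [hRdef, Set.mem_diff, Set.mem_inter_iff]; tauto
    rw [h1, Set.ncard_diff Set.inter_subset_left (hZfin.inter_of_left L), hcard, hL4]
  -- uniqueness of the intersection point with L
  have KA : ∀ p q x y : P2, p ≠ q → p ∉ L → x ∈ L → y ∈ L →
      Collinear3 p q x → Collinear3 p q y → x = y := by
    rintro p q x y hpq hpL hxL hyL ⟨S, hS, hpS, hqS, hxS⟩ ⟨S', hS', hpS', hqS', hyS'⟩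
    have hSS' : S = S' := line_unique hS hS' hpq hpS hqS hpS' hqS'
    subst hSS'
    by_contra hxy
    have hSL : S = L := line_unique hS hL hxy hxS hyS' hxL hyL
    exact hpL (hSL ▸ hpS)
  -- uniqueness of the partner
  have KB : ∀ p q q' x : P2, p ∈ R → q ∈ R → q' ∈ R → p ≠ q → p ≠ q' → x ∈ L →
      Collinear3 p q x → Collinear3 p q' x → q = q' := by
    rintro p q q' x hp hq hq' hpq hpq' hxL ⟨S, hS, hpS, hqS, hxS⟩ ⟨S', hS', hpS', hq'S', hxS'⟩
    by_contra hqq'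
    have hpx : p ≠ x := fun h => (hRL p hp) (h ▸ hxL)
    have hSS' : S = S' := line_unique hS hS' hpx hpS hxS hpS' hxS'
    exact hR p hp q hq q' hq' hpq hpq' hqq' ⟨S, hS, hpS, hqS, hSS' ▸ hq'S'⟩
  have H2 : ∀ pq : P2 × P2, ∃ x : P2, pq.1 ∈ R → pq.2 ∈ R → pq.1 ≠ pq.2 →
      x ∈ Z ∧ x ∈ L ∧ Collinear3 pq.1 pq.2 x := by
    rintro ⟨p, q⟩
    by_cases h : p ∈ R ∧ q ∈ R ∧ p ≠ q
    · obtain ⟨hp, hq, hpq⟩ := h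
      obtain ⟨S, hS, hpS, hqS⟩ := exists_line_through p q hpq
      obtain ⟨x, ⟨hxS, hxL⟩, hxZ⟩ := hcon p hp q hq hpq S hS hpS hqS
      exact ⟨x, fun _ _ _ => ⟨hxZ, hxL, ⟨S, hS, hpS, hqS, hxS⟩⟩⟩
    · exact ⟨p, fun h1 h2 h3 => absurd ⟨h1, h2, h3⟩ h⟩
  choose ψ hψ using H2
  set Rf : Finset P2 := hRfin.toFinset with hRfdef
  have hmemRf : ∀ p, p ∈ Rf ↔ p ∈ R := fun p => hRfin.mem_toFinset
  have hRfcard : Rf.card = 5 := by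
    rw [← Set.ncard_eq_toFinset_card R hRfin] at *
    exact hRcard
  have hTfin : (Z ∩ L).Finite := hZfin.inter_of_left L
  set Tf : Finset P2 := hTfin.toFinset with hTfdef
  have hTfcard : Tf.card = 4 := by
    rw [← Set.ncard_eq_toFinset_card _ hTfin] at *
    exact hL4
  have hmaps : ∀ pq ∈ Rf.offDiag, ψ pq ∈ Tf := by
    rintro ⟨p, q⟩ hpq
    rw [Finset.mem_offDiag] at hpq
    obtain ⟨hp, hq, hne⟩ := hpq
    obtain ⟨hz, hl, _⟩ := hψ (p, q) ((hmemRf p).1 hp) ((hmemRf q).1 hq) hne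
    exact hTfin.mem_toFinset.2 ⟨hz, hl⟩
  have hcard20 : Rf.offDiag.card = 20 := by rw [Finset.offDiag_card, hRfcard]
  obtain ⟨x, hxT, hxfiber⟩ :=
    Finset.exists_lt_card_fiber_of_mul_lt_card_of_maps_to hmaps
      (show Tf.card * 4 < Rf.offDiag.card by rw [hTfcard, hcard20]; norm_num)
  have hxL : x ∈ L := (hTfin.mem_toFinset.1 hxT).2
  set F := Rf.offDiag.filter (fun pq => ψ pq = x) with hFdef
  have hFprop : ∀ pq ∈ F, pq.1 ∈ R ∧ pq.2 ∈ R ∧ pq.1 ≠ pq.2 ∧ Collinear3 pq.1 pq.2 x := by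
    rintro ⟨p, q⟩ hpq
    rw [hFdef, Finset.mem_filter, Finset.mem_offDiag] at hpq
    obtain ⟨⟨hp, hq, hne⟩, hpsix⟩ := hpq
    have hp' := (hmemRf p).1 hp
    have hq' := (hmemRf q).1 hq
    obtain ⟨_, _, hc⟩ := hψ (p, q) hp' hq' hne
    exact ⟨hp', hq', hne, hpsix ▸ hc⟩
  have hinj : ∀ pq ∈ F, ∀ pq' ∈ F, pq.1 = pq'.1 → pq = pq' := by
    rintro ⟨p, q⟩ h1 ⟨p', q'⟩ h2 h
    simp only at h
    subst h
    obtain ⟨hp, hq, hne, hc⟩ := hFprop _ h1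
    obtain ⟨_, hq', hne', hc'⟩ := hFprop _ h2
    have : q = q' := KB p q q' x hp hq hq' hne hne' hxL hc hc'
    simp [this]
  have himage : F.image Prod.fst = Rf := by
    apply Finset.eq_of_subset_of_card_le
    · intro p hp
      obtain ⟨pq, hpq, rfl⟩ := Finset.mem_image.1 hp
      exact (hmemRf _).2 (hFprop _ hpq).1
    · rw [Finset.card_image_of_injOn (fun a ha b hb hh => hinj a ha b hb hh)]
      omega
  have hpartner : ∀ p, p ∈ Rf → ∃ q, (p, q) ∈ F := by
    intro p hp
    rw [← himage] at hp
    obtain ⟨⟨p', q⟩, hpq, h⟩ := Finset.mem_image.1 hp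
    simp only at h
    subst h
    exact ⟨q, hpq⟩
  choose! σ hσ using hpartner
  have hsymm : ∀ p q : P2, (p, q) ∈ F → (q, p) ∈ F := by
    intro p q h
    obtain ⟨hp, hq, hne, hc⟩ := hFprop _ h
    have hc' : Collinear3 q p x := by
      obtain ⟨S, a1, a2, a3, a4⟩ := hc; exact ⟨S, a1, a3, a2, a4⟩
    obtain ⟨_, hyL, hyc⟩ := hψ (q, p) hq hp (Ne.symm hne)
    have hxeq : ψ (q, p) = x :=
      KA q p (ψ (q, p)) x (Ne.symm hne) (hRL q hq) hyL hxL hyc hc'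
    rw [hFdef, Finset.mem_filter, Finset.mem_offDiag]
    exact ⟨⟨(hmemRf q).2 hq, (hmemRf p).2 hp, Ne.symm hne⟩, hxeq⟩
  have hσmem : ∀ p ∈ Rf, σ p ∈ Rf := fun p hp => (hmemRf _).2 (hFprop _ (hσ p hp)).2.1
  have hσne : ∀ p ∈ Rf, σ p ≠ p := fun p hp => Ne.symm (hFprop _ (hσ p hp)).2.2.1
  have hσinv : ∀ p ∈ Rf, σ (σ p) = p := by
    intro p hp
    have h1 : (σ p, σ (σ p)) ∈ F := hσ (σ p) (hσmem p hp)
    have h2 : (σ p, p) ∈ F := hsymm p (σ p) (hσ p hp)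
    have := hinj _ h1 _ h2 rfl
    exact congrArg Prod.snd this
  have hev := even_card_of_invol σ Rf hσmem hσinv hσne
  rw [hRfcard] at hev
  exact (by decide : ¬ Even 5) hev
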